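/- Strong simulation is a precongruence with respect to parallel composition: if L₂ ⪯ A and L₂, A have the same alphabet, then L₁ ∥ L₂ ⪯ L₁ ∥ A for any LPTS L₁. Specifically, if R ⊆ S₂ × S_A is a strong simulation then {((s₁,s₂),(s₁,t)) | s₁ ∈ S₁, (s₂,t) ∈ R} is a strong simulation between L₁ ∥ L₂ and L₁ ∥ A. -/

import Mathlib

open Finset
open scoped Classical

/-- A discrete probability distribution on a finite set `S`, with rational values. -/
structure PDist (S : Type) [Fintype S] where
  prob : S → ℚ
  nonneg : ∀ s, 0 ≤ prob s
  sum_one : ∑ s, prob s = 1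

/-- The product distribution `ν₁ ⊗ ν₂`. -/
def PDist.prod {S₁ S₂ : Type} [Fintype S₁] [Fintype S₂]
    (ν₁ : PDist S₁) (ν₂ : PDist S₂) : PDist (S₁ × S₂) where
  prob := fun p => ν₁.prob p.1 * ν₂.prob p.2
  nonneg := fun p => mul_nonneg (ν₁.nonneg _) (ν₂.nonneg _)
  sum_one := by
    rw [Fintype.sum_prod_type]
    simp_rw [← Finset.mul_sum]
    simp [ν₂.sum_one, ν₁.sum_one]

/-- The Dirac distribution on `s`. -/
noncomputable def PDist.dirac {S : Type} [Fintype S] (s : S) : PDist S where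
  prob := fun t => if t = s then 1 else 0
  nonneg := by intro t; by_cases h : t = s <;> simp [h]
  sum_one := by simp

/-- The lifting `μ₁ ⊑_R μ₂` of a relation `R` to distributions, via a weight function. -/
def DistLe {S₁ S₂ : Type} [Fintype S₁] [Fintype S₂]
    (R : S₁ → S₂ → Prop) (μ₁ : PDist S₁) (μ₂ : PDist S₂) : Prop :=
  ∃ w : S₁ → S₂ → ℚ,
    (∀ s₁ s₂, 0 ≤ w s₁ s₂ ∧ w s₁ s₂ ≤ 1) ∧
    (∀ s₁, μ₁.prob s₁ = ∑ s₂, w s₁ s₂) ∧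
    (∀ s₂, μ₂.prob s₂ = ∑ s₁, w s₁ s₂) ∧
    (∀ s₁ s₂, 0 < w s₁ s₂ → R s₁ s₂)

/-- A labeled probabilistic transition system over states `S`, with an explicit
alphabet `alpha ⊆ A`. -/
structure LPTS (S A : Type) [Fintype S] where
  start : S
  alpha : Set A
  trans : S → A → PDist S → Prop

/-- `R` is a strong simulation between `L₁` and `L₂`. -/
def IsStrongSim {S₁ S₂ A : Type} [Fintype S₁] [Fintype S₂]
    (L₁ : LPTS S₁ A) (L₂ : LPTS S₂ A) (R : S₁ → S₂ → Prop) : Prop :=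
  ∀ s₁ s₂, R s₁ s₂ → ∀ a μ₁, L₁.trans s₁ a μ₁ →
    ∃ μ₂, L₂.trans s₂ a μ₂ ∧ DistLe R μ₁ μ₂

/-- `L₁ ⪯ L₂`: simulation conformance. -/
def Sim {S₁ S₂ A : Type} [Fintype S₁] [Fintype S₂]
    (L₁ : LPTS S₁ A) (L₂ : LPTS S₂ A) : Prop :=
  ∃ R, IsStrongSim L₁ L₂ R ∧ R L₁.start L₂.start

/-- Parallel composition `L₁ ∥ L₂`: synchronization on shared actions via product
distributions, interleaving (with a Dirac distribution on the idle component) on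
non-shared actions. -/
noncomputable def parComp {S₁ S₂ A : Type} [Fintype S₁] [Fintype S₂]
    (L₁ : LPTS S₁ A) (L₂ : LPTS S₂ A) : LPTS (S₁ × S₂) A where
  start := (L₁.start, L₂.start)
  alpha := L₁.alpha ∪ L₂.alpha
  trans := fun p a μ =>
    (∃ μ₁ μ₂, L₁.trans p.1 a μ₁ ∧ L₂.trans p.2 a μ₂ ∧ μ = μ₁.prod μ₂) ∨
    (∃ μ₁, L₁.trans p.1 a μ₁ ∧ a ∉ L₂.alpha ∧ μ = μ₁.prod (PDist.dirac p.2)) ∨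
    (∃ μ₂, a ∉ L₁.alpha ∧ L₂.trans p.2 a μ₂ ∧ μ = (PDist.dirac p.1).prod μ₂)


lemma PDist.prob_le_one {S : Type} [Fintype S] (μ : PDist S) (s : S) :
    μ.prob s ≤ 1 := by
  have h := μ.sum_one
  calc μ.prob s ≤ ∑ t, μ.prob t :=
        Finset.single_le_sum (fun t _ => μ.nonneg t) (Finset.mem_univ s)
    _ = 1 := h

lemma DistLe.dirac {S₁ S₂ : Type} [Fintype S₁] [Fintype S₂]
    {R : S₁ → S₂ → Prop} {s : S₁} {t : S₂} (h : R s t) :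
    DistLe R (PDist.dirac s) (PDist.dirac t) := by
  classical
  refine ⟨fun x y => if x = s ∧ y = t then 1 else 0, ?_, ?_, ?_, ?_⟩
  · intro x y; dsimp; split <;> norm_num
  · intro x
    by_cases hx : x = s <;>
      simp [PDist.dirac, hx, Finset.filter_eq', Finset.filter_false_of_mem]
  · intro y
    by_cases hy : y = t <;>
      simp [PDist.dirac, hy, Finset.filter_eq', Finset.filter_false_of_mem]
  · intro x y hw
    by_cases hx : x = s ∧ y = t
    · exact hx.1 ▸ hx.2 ▸ h
    · simp [hx] at hw

lemma DistLe.prodLeft {S₀ S₁ S₂ : Type} [Fintype S₀] [Fintype S₁] [Fintype S₂]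
    {R : S₁ → S₂ → Prop} (μ₀ : PDist S₀) {μ₁ : PDist S₁} {μ₂ : PDist S₂}
    (h : DistLe R μ₁ μ₂) :
    DistLe (fun p q => p.1 = q.1 ∧ R p.2 q.2) (μ₀.prod μ₁) (μ₀.prod μ₂) := by
  classical
  obtain ⟨w, hw01, hml, hmr, hR⟩ := h
  refine ⟨fun p q => if p.1 = q.1 then μ₀.prob p.1 * w p.2 q.2 else 0, ?_, ?_, ?_, ?_⟩
  · intro p q; dsimp; split
    · constructor
      · exact mul_nonneg (μ₀.nonneg _) (hw01 _ _).1
      · exact mul_le_one₀ (μ₀.prob_le_one _) (hw01 _ _).1 (hw01 _ _).2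
    · norm_num
  · intro p
    rw [Fintype.sum_prod_type]
    rw [Finset.sum_eq_single p.1]
    · simp [PDist.prod, Finset.mul_sum, hml p.2]
    · intro b _ hb; simp [Ne.symm hb]
    · simp
  · intro q
    rw [Fintype.sum_prod_type]
    rw [Finset.sum_eq_single q.1]
    · simp [PDist.prod, Finset.mul_sum, hmr q.2]
    · intro b _ hb; simp [hb]
    · simp
  · intro p q hw
    by_cases hpq : p.1 = q.1
    · refine ⟨hpq, hR _ _ ?_⟩
      simp only [hpq, if_true] at hw
      by_contra hneg
      push_neg at hneg
      have := (hw01 p.2 q.2).1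
      have hz : w p.2 q.2 = 0 := le_antisymm hneg this
      simp [hz] at hw
    · simp [hpq] at hw

/-- Strong simulation is a precongruence w.r.t. parallel composition: if `R` is a strong
simulation between `L₂` and `As` (which share the same alphabet), then the product
relation is a strong simulation between `L₁ ∥ L₂` and `L₁ ∥ As`; consequently
`L₂ ⪯ As` implies `L₁ ∥ L₂ ⪯ L₁ ∥ As`. -/
theorem parComp_precongruence {S₁ S₂ SA Act : Type}
    [Fintype S₁] [Fintype S₂] [Fintype SA]
    (L₁ : LPTS S₁ Act) (L₂ : LPTS S₂ Act) (As : LPTS SA Act)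
    (halpha : L₂.alpha = As.alpha) :
    (∀ R : S₂ → SA → Prop, IsStrongSim L₂ As R →
      IsStrongSim (parComp L₁ L₂) (parComp L₁ As)
        (fun p q => p.1 = q.1 ∧ R p.2 q.2)) ∧
    (Sim L₂ As → Sim (parComp L₁ L₂) (parComp L₁ As)) := by
  
  have main : ∀ R : S₂ → SA → Prop, IsStrongSim L₂ As R →
      IsStrongSim (parComp L₁ L₂) (parComp L₁ As)
        (fun p q => p.1 = q.1 ∧ R p.2 q.2) := by
    intro R hsim p q ⟨hpq, hR⟩ a μ htr
    rcases htr with ⟨μ₁, μ₂, h1, h2, rfl⟩ | ⟨μ₁, h1, hna, rfl⟩ | ⟨μ₂, hna, h2, rfl⟩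
    · obtain ⟨μA, hA, hle⟩ := hsim _ _ hR a μ₂ h2
      exact ⟨μ₁.prod μA, Or.inl ⟨μ₁, μA, hpq ▸ h1, hA, rfl⟩, DistLe.prodLeft μ₁ hle⟩
    · refine ⟨μ₁.prod (PDist.dirac q.2), Or.inr (Or.inl ⟨μ₁, hpq ▸ h1, halpha ▸ hna, rfl⟩),
        ?_⟩
      exact DistLe.prodLeft μ₁ (DistLe.dirac hR)
    · obtain ⟨μA, hA, hle⟩ := hsim _ _ hR a μ₂ h2
      refine ⟨(PDist.dirac q.1).prod μA, Or.inr (Or.inr ⟨μA, hna, hA, rfl⟩), ?_⟩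
      have := DistLe.prodLeft (PDist.dirac q.1) hle
      rw [hpq]
      exact this
  refine ⟨main, ?_⟩
  rintro ⟨R, hsim, hstart⟩
  exact ⟨_, main R hsim, rfl, hstart⟩
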